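/- Let A be a vector space over ℚ, and let D, R be natural numbers with 2 ≤ D and D + 1 ≤ R. Suppose v : ℕ → A and w : ℕ → A satisfy, for every natural number m ≥ 1, v m = (C(m+R-1, R) + ∑_{i=2}^{D} (-1)^{i-1}·(i-1)·C(D, i)·C(m+R-1-i, R)) • v 1 + ∑_{i=2}^{D} (-1)^{i}·C(m+R-1-i, R-1) • w i, with all scalars taken in ℚ. Then for every m ≥ 1, v m lies in the ℚ-linear span of {v 1, v 2, …, v D}. -/

import Mathlib

/-- Theorem 3.1 (Equation MainEq), first assertion: under the displayed recursion,
`v m` lies in the span of `v 1, …, v D` for all `m ≥ 1`. -/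
theorem stmt_0 {A : Type*} [AddCommGroup A] [Module ℚ A]
    (D R : ℕ) (hD : 2 ≤ D) (hR : D + 1 ≤ R)
    (v w : ℕ → A)
    (hv : ∀ m : ℕ, 1 ≤ m →
      v m = (((m + R - 1).choose R : ℚ)
            + ∑ i ∈ Finset.Icc 2 D,
                (-1 : ℚ) ^ (i - 1) * ((i - 1 : ℕ) : ℚ) * (D.choose i : ℚ)
                  * ((m + R - 1 - i).choose R : ℚ)) • v 1
          + ∑ i ∈ Finset.Icc 2 D,
              ((-1 : ℚ) ^ i * ((m + R - 1 - i).choose (R - 1) : ℚ)) • w i) :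
    ∀ m : ℕ, 1 ≤ m → v m ∈ Submodule.span ℚ (v '' Set.Icc 1 D) := by
  set S : Submodule ℚ A := Submodule.span ℚ (v '' Set.Icc 1 D) with hS
  have hvS : ∀ k, 1 ≤ k → k ≤ D → v k ∈ S := by
    intro k h1 h2
    exact Submodule.subset_span ⟨k, ⟨h1, h2⟩, rfl⟩
  have hw : ∀ i, 2 ≤ i → i ≤ D → w i ∈ S := by
    intro i
    induction i using Nat.strong_induction_on with
    | _ i IH =>
      intro h2 hiD
      have hvi := hv i (by omega)
      have hiI : i ∈ Finset.Icc 2 D := Finset.mem_Icc.mpr ⟨h2, hiD⟩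
      have hii : i + R - 1 - i = R - 1 := by omega
      have hsplit := (Finset.add_sum_erase (Finset.Icc 2 D)
        (fun j => ((-1 : ℚ) ^ j * ((i + R - 1 - j).choose (R - 1) : ℚ)) • w j) hiI).symm
      rw [hii, Nat.choose_self, Nat.cast_one, mul_one] at hsplit
      rw [hsplit] at hvi
      have hsum : ∑ j ∈ (Finset.Icc 2 D).erase i,
          ((-1 : ℚ) ^ j * ((i + R - 1 - j).choose (R - 1) : ℚ)) • w j ∈ S := by
        refine Submodule.sum_mem _ ?_
        intro j hj
        obtain ⟨hji, hj2, hjD⟩ :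
            j ≠ i ∧ 2 ≤ j ∧ j ≤ D := by
          rw [Finset.mem_erase, Finset.mem_Icc] at hj
          exact ⟨hj.1, hj.2.1, hj.2.2⟩
        rcases lt_or_gt_of_ne hji with hlt | hgt
        · exact Submodule.smul_mem _ _ (IH j hlt hj2 hjD)
        · have : i + R - 1 - j < R - 1 := by omega
          rw [Nat.choose_eq_zero_of_lt this]
          simp
      have h1 : ((-1 : ℚ) ^ i) • w i ∈ S := by
        have : ((-1 : ℚ) ^ i) • w i
            = v i - (((i + R - 1).choose R : ℚ)
            + ∑ k ∈ Finset.Icc 2 D,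
                (-1 : ℚ) ^ (k - 1) * ((k - 1 : ℕ) : ℚ) * (D.choose k : ℚ)
                  * ((i + R - 1 - k).choose R : ℚ)) • v 1
            - ∑ j ∈ (Finset.Icc 2 D).erase i,
                ((-1 : ℚ) ^ j * ((i + R - 1 - j).choose (R - 1) : ℚ)) • w j := by
          rw [hvi]; abel
        rw [this]
        exact Submodule.sub_mem _ (Submodule.sub_mem _ (hvS i (by omega) hiD)
          (Submodule.smul_mem _ _ (hvS 1 le_rfl (by omega)))) hsum
      have h2' := Submodule.smul_mem _ ((-1 : ℚ) ^ i) h1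
      rwa [smul_smul, ← pow_add, Even.neg_one_pow ⟨i, rfl⟩, one_smul] at h2'
  intro m hm
  rw [hv m hm]
  refine Submodule.add_mem _ (Submodule.smul_mem _ _ (hvS 1 le_rfl (by omega)))
    (Submodule.sum_mem _ ?_)
  intro j hj
  rw [Finset.mem_Icc] at hj
  exact Submodule.smul_mem _ _ (hw j hj.1 hj.2)
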